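/- Let P be a polynomial of degree m ≥ 1 and t ∈ (0,1). Suppose w ≠ 0 and z satisfy m·P(z + t/w) − (1/w)·P'(z + t/w) = 0. Then w satisfies the polynomial equation Σ_{j=0}^{m} (m − j/t) · (P^{(j)}(z)/j!) · t^j · w^{m−j} = 0. -/

import Mathlib

open Polynomial

lemma taylor_expand_aux (f : Polynomial ℂ) (n : ℕ) (hf : f.natDegree ≤ n) (z s : ℂ) :
    f.eval (z + s) = ∑ j ∈ Finset.range (n + 1),
      ((Polynomial.derivative^[j] f).eval z / (Nat.factorial j : ℂ)) * s ^ j := by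
  have h1 : f.eval (z + s) = (Polynomial.taylor z f).eval s := by
    rw [Polynomial.taylor_eval, add_comm]
  rw [h1, Polynomial.eval_eq_sum_range'
    (lt_of_le_of_lt (by rw [Polynomial.natDegree_taylor]; exact hf) (Nat.lt_succ_self n))]
  refine Finset.sum_congr rfl fun j _ => ?_
  congr 1
  rw [Polynomial.taylor_coeff]
  have hfac : (Polynomial.derivative^[j] f) = (j.factorial) • Polynomial.hasseDeriv j f := by
    rw [← Polynomial.factorial_smul_hasseDeriv]; rfl
  rw [hfac]
  simp only [Polynomial.eval_smul, smul_eq_mul, nsmul_eq_mul]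
  have : ((j.factorial : ℂ)) ≠ 0 := by exact_mod_cast j.factorial_ne_zero
  field_simp
  rw [Polynomial.eval_mul, Polynomial.eval_natCast]
  ring

theorem stmt_14 (P : Polynomial ℂ) (m : ℕ) (hm : 1 ≤ m) (hdeg : P.natDegree = m)
    (t : ℝ) (ht : t ∈ Set.Ioo (0:ℝ) 1) (z w : ℂ) (hw : w ≠ 0)
    (h : (m : ℂ) * P.eval (z + (t : ℂ) / w) -
        (1 / w) * P.derivative.eval (z + (t : ℂ) / w) = 0) :
    ∑ j ∈ Finset.range (m + 1),
      ((m : ℂ) - (j : ℂ) / (t : ℂ)) *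
        (((Polynomial.derivative^[j] P).eval z) / (Nat.factorial j : ℂ)) *
        (t : ℂ) ^ j * w ^ (m - j) = 0 := by
  have ht0 : (t : ℂ) ≠ 0 := by
    exact_mod_cast ne_of_gt ht.1
  set s : ℂ := (t : ℂ) / w with hs
  have hP : P.eval (z + s) = ∑ j ∈ Finset.range (m + 1),
      ((Polynomial.derivative^[j] P).eval z / (Nat.factorial j : ℂ)) * s ^ j :=
    taylor_expand_aux P m (le_of_eq hdeg) z s
  have hdegP' : P.derivative.natDegree ≤ m - 1 :=
    le_trans (Polynomial.natDegree_derivative_le P) (by omega)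
  have hP' : P.derivative.eval (z + s) = ∑ k ∈ Finset.range m,
      ((Polynomial.derivative^[k] P.derivative).eval z / (Nat.factorial k : ℂ)) * s ^ k := by
    have := taylor_expand_aux P.derivative (m - 1) hdegP' z s
    rwa [Nat.sub_add_cancel hm] at this
  -- Sum A
  have hA : ∑ j ∈ Finset.range (m + 1),
      (m : ℂ) * ((Polynomial.derivative^[j] P).eval z / (Nat.factorial j : ℂ)) *
        (t : ℂ) ^ j * w ^ (m - j) = w ^ m * ((m : ℂ) * P.eval (z + s)) := by
    rw [hP, Finset.mul_sum, Finset.mul_sum]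
    refine Finset.sum_congr rfl fun j hj => ?_
    have hjm : j ≤ m := Nat.lt_succ_iff.mp (Finset.mem_range.mp hj)
    rw [pow_sub₀ w hw hjm, hs, div_pow]
    field_simp
  have hB : ∑ j ∈ Finset.range (m + 1),
      ((j : ℂ) / (t : ℂ)) * ((Polynomial.derivative^[j] P).eval z / (Nat.factorial j : ℂ)) *
        (t : ℂ) ^ j * w ^ (m - j) = w ^ m * ((1 / w) * P.derivative.eval (z + s)) := by
    rw [hP', Finset.mul_sum, Finset.mul_sum, Finset.sum_range_succ']
    simp only [Nat.cast_zero, zero_div, zero_mul, add_zero]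
    refine Finset.sum_congr rfl fun k hk => ?_
    have hkm : k + 1 ≤ m := Finset.mem_range.mp hk
    have hiter : Polynomial.derivative^[k] P.derivative = Polynomial.derivative^[k + 1] P := by
      rw [Function.iterate_succ_apply]
    rw [pow_sub₀ w hw hkm, hiter, hs, div_pow, Nat.factorial_succ]
    have hfk : ((k.factorial : ℂ)) ≠ 0 := by exact_mod_cast k.factorial_ne_zero
    have hk1 : ((k : ℂ) + 1) ≠ 0 := Nat.cast_add_one_ne_zero k
    field_simp
    push_cast
    ring
  calc ∑ j ∈ Finset.range (m + 1),
      ((m : ℂ) - (j : ℂ) / (t : ℂ)) *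
        (((Polynomial.derivative^[j] P).eval z) / (Nat.factorial j : ℂ)) *
        (t : ℂ) ^ j * w ^ (m - j)
      = ∑ j ∈ Finset.range (m + 1),
        ((m : ℂ) * ((Polynomial.derivative^[j] P).eval z / (Nat.factorial j : ℂ)) *
          (t : ℂ) ^ j * w ^ (m - j) -
        ((j : ℂ) / (t : ℂ)) * ((Polynomial.derivative^[j] P).eval z / (Nat.factorial j : ℂ)) *
          (t : ℂ) ^ j * w ^ (m - j)) := by
        refine Finset.sum_congr rfl fun j _ => ?_; ring
    _ = w ^ m * ((m : ℂ) * P.eval (z + s)) - w ^ m * ((1 / w) * P.derivative.eval (z + s)) := by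
        rw [Finset.sum_sub_distrib, hA, hB]
    _ = w ^ m * ((m : ℂ) * P.eval (z + s) - (1 / w) * P.derivative.eval (z + s)) := by ring
    _ = 0 := by rw [h]; ring
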